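/- In an exact Mal'tsev category, for a reflexive graph (d, c : C₁ → C₀, e), the arrow (d,c) : C₁ → C₀ × C₀ is an epimorphism if and only if the pushout π₀(C) of d and c is a zero object. Moreover, when this holds, (d,c) is a regular epimorphism. -/

import Mathlib

open CategoryTheory CategoryTheory.Limits

/-- A regular epi composed with an isomorphism is a regular epi. -/
noncomputable def regularEpiCompIso {C : Type*} [Category C] {X Y Z : C}
    (f : X ⟶ Y) (hf : RegularEpi f) (i : Y ⟶ Z) [IsIso i] : RegularEpi (f ≫ i) where
  W := hf.W
  left := hf.left
  right := hf.right
  w := by rw [hf.w_assoc]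
  isColimit := by
    refine Cofork.IsColimit.mk _
      (fun s => inv i ≫ Cofork.IsColimit.desc hf.isColimit s.π s.condition) ?_ ?_
    · intro s
      simp only [Cofork.π_ofπ, Category.assoc, IsIso.hom_inv_id_assoc]
      exact Cofork.IsColimit.π_desc hf.isColimit
    · intro s m hm
      rw [IsIso.eq_inv_comp]
      apply Cofork.IsColimit.hom_ext hf.isColimit
      have h2 : f ≫ Cofork.IsColimit.desc hf.isColimit s.π s.condition = s.π :=
        Cofork.IsColimit.π_desc hf.isColimit
      simp only [Cofork.π_ofπ, h2]
      simpa using hm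

/-- In an exact Mal'tsev category (pointed, finitely complete; exactness and
the Mal'tsev property are encoded via the CKP property that the comparison morphism from
`C₁` to the pullback of the pushout of the split epimorphisms `d` and `c` is a regular
epimorphism), for a reflexive graph `(d, c : C₁ ⟶ C₀, e)`, the arrow
`(d,c) : C₁ ⟶ C₀ × C₀` is an epimorphism if and only if the pushout `π₀(C)` of `d` and
`c` is a zero object; moreover, when this holds, `(d,c)` is a regular epimorphism. -/
theorem epi_iff_pushout_isZero {C : Type*} [Category C]
    [HasZeroMorphisms C] [HasZeroObject C] [HasFiniteLimits C]
    {C₁ C₀ : C} (d c : C₁ ⟶ C₀) (e : C₀ ⟶ C₁)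
    (hde : e ≫ d = 𝟙 C₀) (hce : e ≫ c = 𝟙 C₀)
    [HasPushout d c]
    (hmaltsev : Nonempty (RegularEpi
      (pullback.lift d c pushout.condition :
        C₁ ⟶ pullback (pushout.inl d c) (pushout.inr d c)))) :
    (Epi (prod.lift d c) ↔ IsZero (pushout d c)) ∧
    (Epi (prod.lift d c) → Nonempty (RegularEpi (prod.lift d c))) := by
  obtain ⟨hre⟩ := hmaltsev
  -- Key: if the pushout is zero, then (d,c) is a regular epi.
  have key : IsZero (pushout d c) → Nonempty (RegularEpi (prod.lift d c)) := by
    intro hz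
    -- The pullback of inl, inr is isomorphic to the product C₀ × C₀.
    set m : pullback (pushout.inl d c) (pushout.inr d c) ⟶ C₀ ⨯ C₀ :=
      prod.lift (pullback.fst _ _) (pullback.snd _ _) with hm
    have hiso : IsIso m := by
      refine ⟨pullback.lift prod.fst prod.snd (hz.eq_of_tgt _ _), ?_, ?_⟩
      · apply Limits.pullback.hom_ext <;> simp [hm, prod.lift_fst, prod.lift_snd, prod.lift_fst_assoc, prod.lift_snd_assoc, pullback.lift_fst, pullback.lift_snd]
      · apply Limits.prod.hom_ext <;> simp [hm, prod.lift_fst, prod.lift_snd, prod.lift_fst_assoc, prod.lift_snd_assoc, pullback.lift_fst, pullback.lift_snd]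
    have hcomp : pullback.lift d c pushout.condition ≫ m = prod.lift d c := by
      apply Limits.prod.hom_ext <;> simp [hm, prod.lift_fst, prod.lift_snd, prod.lift_fst_assoc, prod.lift_snd_assoc, pullback.lift_fst, pullback.lift_snd]
    rw [← hcomp]
    exact ⟨regularEpiCompIso _ hre m⟩
  constructor
  · constructor
    · intro hepi
      -- inl = inr since e is a common section
      have hrel : pushout.inl d c = pushout.inr d c := by
        have := pushout.condition (f := d) (g := c)
        calc pushout.inl d c = e ≫ d ≫ pushout.inl d c := by rw [← Category.assoc, hde]; simp
          _ = e ≫ c ≫ pushout.inr d c := by rw [this]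
          _ = pushout.inr d c := by rw [← Category.assoc, hce]; simp
      -- hence inl = 0
      have h0 : pushout.inl d c = 0 := by
        have h1 : prod.lift d c ≫ (prod.fst ≫ pushout.inl d c)
            = prod.lift d c ≫ (prod.snd ≫ pushout.inl d c) := by
          simp only [prod.lift_fst_assoc, prod.lift_snd_assoc]
          rw [pushout.condition, hrel]
        have h2 := (cancel_epi (prod.lift d c)).mp h1
        have h3 := congrArg (fun t => (prod.lift (𝟙 C₀) (0 : C₀ ⟶ C₀)) ≫ t) h2
        simpa [prod.lift_fst, prod.lift_snd, prod.lift_fst_assoc, prod.lift_snd_assoc] using h3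
      rw [IsZero.iff_id_eq_zero]
      apply pushout.hom_ext
      · simp [h0]
      · simp [← hrel, h0]
    · intro hz
      obtain ⟨r⟩ := key hz
      exact r.epi _
  · intro hepi
    apply key
    -- reuse the forward direction
    have hrel : pushout.inl d c = pushout.inr d c := by
      have := pushout.condition (f := d) (g := c)
      calc pushout.inl d c = e ≫ d ≫ pushout.inl d c := by rw [← Category.assoc, hde]; simp
        _ = e ≫ c ≫ pushout.inr d c := by rw [this]
        _ = pushout.inr d c := by rw [← Category.assoc, hce]; simp
    have h0 : pushout.inl d c = 0 := by
      have h1 : prod.lift d c ≫ (prod.fst ≫ pushout.inl d c)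
          = prod.lift d c ≫ (prod.snd ≫ pushout.inl d c) := by
        simp only [prod.lift_fst_assoc, prod.lift_snd_assoc]
        rw [pushout.condition, hrel]
      have h2 := (cancel_epi (prod.lift d c)).mp h1
      have h3 := congrArg (fun t => (prod.lift (𝟙 C₀) (0 : C₀ ⟶ C₀)) ≫ t) h2
      simpa [prod.lift_fst, prod.lift_snd, prod.lift_fst_assoc, prod.lift_snd_assoc] using h3
    rw [IsZero.iff_id_eq_zero]
    apply pushout.hom_ext
    · simp [h0]
    · simp [← hrel, h0]
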